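/- For each integer n ≥ 2 and λ, λ₀₀ > 0, let ṽ_1(n) be defined by the complete-graph recursion (ṽ_n = λ₀₀/λ and ṽ_j = (λ₀₀ + (j(n−j)λ/(n−1))·ṽ_{j+1}) / (jλ/n + j(n−j)λ/(n−1)) for 1 ≤ j ≤ n−1). Then ṽ_1(n)/log n → λ₀₀/λ as n → ∞; in particular the average version age of a node in the symmetric complete gossip network grows logarithmically in the network size n. -/

import Mathlib

open Finset Filter Real

/-- Upper bound: `v n j ≤ (λ₀₀/λ) (∑_{i=j}^{n-1} 1/i + 5)`, by downward induction. -/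
private lemma gossip_aux_upper
    (lam lam00 : ℝ) (hlam : 0 < lam) (hlam00 : 0 < lam00)
    (v : ℕ → ℕ → ℝ) (n : ℕ) (hn : 2 ≤ n)
    (hvn : v n n = lam00 / lam)
    (hrec : ∀ j : ℕ, 1 ≤ j → j ≤ n - 1 →
      v n j = (lam00 + ((j : ℝ) * ((n : ℝ) - j) * lam / ((n : ℝ) - 1)) * v n (j + 1)) /
              ((j : ℝ) * lam / n + (j : ℝ) * ((n : ℝ) - j) * lam / ((n : ℝ) - 1))) :
    ∀ k j : ℕ, j + k = n → 1 ≤ j →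
      v n j ≤ (lam00 / lam) * ((∑ i ∈ Finset.Ico j n, (1 : ℝ) / i) + 5) := by
  intro k
  induction k with
  | zero =>
    intro j hj _
    have hjn : j = n := by omega
    subst hjn
    rw [hvn, Finset.Ico_self, Finset.sum_empty]
    have hc : 0 < lam00 / lam := div_pos hlam00 hlam
    nlinarith
  | succ k ih =>
    intro j hj hj1
    have hjlt : j < n := by omega
    have hv' := ih (j + 1) (by omega) (by omega)
    -- real number facts
    have hN2 : (2 : ℝ) ≤ (n : ℝ) := by exact_mod_cast hn
    have hJ1 : (1 : ℝ) ≤ (j : ℝ) := by exact_mod_cast hj1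
    have hNJ : (n : ℝ) - (j : ℝ) = (k : ℝ) + 1 := by
      have : ((j + (k + 1) : ℕ) : ℝ) = (n : ℝ) := by exact_mod_cast congrArg (Nat.cast : ℕ → ℝ) hj
      push_cast at this
      linarith
    have hNJ1 : (1 : ℝ) ≤ (n : ℝ) - (j : ℝ) := by
      have hK0 : (0 : ℝ) ≤ (k : ℝ) := Nat.cast_nonneg k
      rw [hNJ]; linarith
    have hN1 : (1 : ℝ) ≤ (n : ℝ) - 1 := by linarith
    have hJ0 : (0 : ℝ) < (j : ℝ) := by linarith
    have hN0 : (0 : ℝ) < (n : ℝ) := by linarith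
    have hN10 : (0 : ℝ) < (n : ℝ) - 1 := by linarith
    have hNJ0 : (0 : ℝ) < (n : ℝ) - (j : ℝ) := by linarith
    set A : ℝ := (j : ℝ) * ((n : ℝ) - j) * lam / ((n : ℝ) - 1) with hA_def
    set B : ℝ := (j : ℝ) * lam / n with hB_def
    have hA : 0 < A := by
      apply div_pos _ hN10
      exact mul_pos (mul_pos hJ0 hNJ0) hlam
    have hB : 0 < B := div_pos (mul_pos hJ0 hlam) hN0
    have hBA : 0 < B + A := by linarith
    set s : ℝ := ∑ i ∈ Finset.Ico (j + 1) n, (1 : ℝ) / i with hs_def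
    have hs : 0 ≤ s := by
      apply Finset.sum_nonneg
      intro i _
      positivity
    have hsum : (∑ i ∈ Finset.Ico j n, (1 : ℝ) / i) = 1 / (j : ℝ) + s := by
      rw [Finset.sum_eq_sum_Ico_succ_bot hjlt]
    rw [hrec j hj1 (by omega), hsum]
    rw [div_le_iff₀ hBA]
    set c : ℝ := lam00 / lam with hc_def
    have hc : 0 < c := div_pos hlam00 hlam
    have step1 : lam00 + A * v n (j + 1) ≤ lam00 + A * (c * (s + 5)) := by
      have := mul_le_mul_of_nonneg_left hv' hA.le
      linarith
    refine le_trans step1 ?_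
    have hlam' : lam ≠ 0 := ne_of_gt hlam
    have hJ' : (j : ℝ) ≠ 0 := ne_of_gt hJ0
    have hN' : (n : ℝ) ≠ 0 := ne_of_gt hN0
    have hN1' : (n : ℝ) - 1 ≠ 0 := ne_of_gt hN10
    have h1 : c * ((1 / (j : ℝ) + s) + 5) * (B + A)
        = lam00 / n + lam00 * ((n : ℝ) - j) / ((n : ℝ) - 1) + 5 * lam00 * (j : ℝ) / n
          + lam00 * s * (j : ℝ) / n + A * (c * (s + 5)) := by
      rw [hc_def, hA_def, hB_def]
      field_simp
      ring
    rw [h1]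
    have h2 : lam00 * ((n : ℝ) - j) / (n : ℝ) ≤ lam00 * ((n : ℝ) - j) / ((n : ℝ) - 1) := by
      exact div_le_div_of_nonneg_left (by nlinarith) hN10 (by linarith)
    have h3 : lam00 ≤ lam00 / n + lam00 * ((n : ℝ) - j) / n + 5 * lam00 * (j : ℝ) / n
        + lam00 * s * (j : ℝ) / n := by
      rw [← add_div, ← add_div, ← add_div, le_div_iff₀ hN0]
      nlinarith [mul_nonneg (mul_nonneg hlam00.le hs) hJ0.le, mul_pos hlam00 hJ0]
    linarith

/-- Lower bound: `v n j ≥ (λ₀₀/λ) ((n-1)/(k+1)) ∑_{i=j}^{n-1} 1/i` where `j + k = n`. -/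
private lemma gossip_aux_lower
    (lam lam00 : ℝ) (hlam : 0 < lam) (hlam00 : 0 < lam00)
    (v : ℕ → ℕ → ℝ) (n : ℕ) (hn : 2 ≤ n)
    (hvn : v n n = lam00 / lam)
    (hrec : ∀ j : ℕ, 1 ≤ j → j ≤ n - 1 →
      v n j = (lam00 + ((j : ℝ) * ((n : ℝ) - j) * lam / ((n : ℝ) - 1)) * v n (j + 1)) /
              ((j : ℝ) * lam / n + (j : ℝ) * ((n : ℝ) - j) * lam / ((n : ℝ) - 1))) :
    ∀ k j : ℕ, j + k = n → 1 ≤ j →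
      (lam00 / lam) * (((n : ℝ) - 1) / ((k : ℝ) + 1)) * (∑ i ∈ Finset.Ico j n, (1 : ℝ) / i)
        ≤ v n j := by
  intro k
  induction k with
  | zero =>
    intro j hj _
    have hjn : j = n := by omega
    subst hjn
    rw [hvn, Finset.Ico_self, Finset.sum_empty, mul_zero]
    positivity
  | succ k ih =>
    intro j hj hj1
    have hjlt : j < n := by omega
    have hv' := ih (j + 1) (by omega) (by omega)
    have hN2 : (2 : ℝ) ≤ (n : ℝ) := by exact_mod_cast hn
    have hJ1 : (1 : ℝ) ≤ (j : ℝ) := by exact_mod_cast hj1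
    have hNJ : (n : ℝ) - (j : ℝ) = (k : ℝ) + 1 := by
      have : ((j + (k + 1) : ℕ) : ℝ) = (n : ℝ) := by exact_mod_cast congrArg (Nat.cast : ℕ → ℝ) hj
      push_cast at this
      linarith
    have hK0 : (0 : ℝ) ≤ (k : ℝ) := Nat.cast_nonneg k
    have hJ0 : (0 : ℝ) < (j : ℝ) := by linarith
    have hN0 : (0 : ℝ) < (n : ℝ) := by linarith
    have hN10 : (0 : ℝ) < (n : ℝ) - 1 := by linarith
    have hNJ0 : (0 : ℝ) < (n : ℝ) - (j : ℝ) := by rw [hNJ]; linarith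
    set A : ℝ := (j : ℝ) * ((n : ℝ) - j) * lam / ((n : ℝ) - 1) with hA_def
    set B : ℝ := (j : ℝ) * lam / n with hB_def
    have hA : 0 < A := by
      apply div_pos _ hN10
      exact mul_pos (mul_pos hJ0 hNJ0) hlam
    have hB : 0 < B := div_pos (mul_pos hJ0 hlam) hN0
    have hBA : 0 < B + A := by linarith
    set s : ℝ := ∑ i ∈ Finset.Ico (j + 1) n, (1 : ℝ) / i with hs_def
    have hs : 0 ≤ s := by
      apply Finset.sum_nonneg
      intro i _
      positivity
    have hsum : (∑ i ∈ Finset.Ico j n, (1 : ℝ) / i) = 1 / (j : ℝ) + s := by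
      rw [Finset.sum_eq_sum_Ico_succ_bot hjlt]
    rw [hrec j hj1 (by omega), hsum]
    rw [le_div_iff₀ hBA]
    push_cast
    set c : ℝ := lam00 / lam with hc_def
    have hc : 0 < c := div_pos hlam00 hlam
    have hlam' : lam ≠ 0 := ne_of_gt hlam
    have hJ' : (j : ℝ) ≠ 0 := ne_of_gt hJ0
    have hN' : (n : ℝ) ≠ 0 := ne_of_gt hN0
    have hN1' : (n : ℝ) - 1 ≠ 0 := ne_of_gt hN10
    have hK1' : (k : ℝ) + 1 ≠ 0 := by positivity
    -- `A * (lower bound for v (j+1)) = lam00 * j * s`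
    have h4 : A * (c * (((n : ℝ) - 1) / ((k : ℝ) + 1)) * s) = lam00 * (j : ℝ) * s := by
      rw [hA_def, hc_def, hNJ]
      field_simp
    have hv'' : lam00 * (j : ℝ) * s ≤ A * v n (j + 1) := by
      have := mul_le_mul_of_nonneg_left hv' hA.le
      rw [h4] at this
      exact this
    -- `B + A ≤ j * lam * (k + 2) / (n - 1)`
    have h5 : B + A ≤ (j : ℝ) * lam * ((k : ℝ) + 2) / ((n : ℝ) - 1) := by
      have hB' : B ≤ (j : ℝ) * lam / ((n : ℝ) - 1) := by
        rw [hB_def]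
        exact div_le_div_of_nonneg_left (by positivity) hN10 (by linarith)
      have hA' : A = (j : ℝ) * ((k : ℝ) + 1) * lam / ((n : ℝ) - 1) := by
        rw [hA_def, hNJ]
      have : (j : ℝ) * lam / ((n : ℝ) - 1) + (j : ℝ) * ((k : ℝ) + 1) * lam / ((n : ℝ) - 1)
          = (j : ℝ) * lam * ((k : ℝ) + 2) / ((n : ℝ) - 1) := by ring
      linarith [hB', hA'.le, hA'.ge]
    have hfac : 0 ≤ c * (((n : ℝ) - 1) / ((k : ℝ) + 1 + 1)) * (1 / (j : ℝ) + s) := by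
      have h1j : 0 ≤ 1 / (j : ℝ) := by positivity
      have h2' : (0:ℝ) ≤ ((n : ℝ) - 1) / ((k : ℝ) + 1 + 1) := by positivity
      exact mul_nonneg (mul_nonneg hc.le h2') (by linarith)
    have h6 : c * (((n : ℝ) - 1) / ((k : ℝ) + 1 + 1)) * (1 / (j : ℝ) + s)
          * ((j : ℝ) * lam * ((k : ℝ) + 2) / ((n : ℝ) - 1))
        = lam00 * (1 + (j : ℝ) * s) := by
      rw [hc_def]
      have hK2' : (k : ℝ) + 2 ≠ 0 := by positivity
      field_simp
      ring
    calc c * (((n : ℝ) - 1) / ((k : ℝ) + 1 + 1)) * (1 / (j : ℝ) + s) * (B + A)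
        ≤ c * (((n : ℝ) - 1) / ((k : ℝ) + 1 + 1)) * (1 / (j : ℝ) + s)
            * ((j : ℝ) * lam * ((k : ℝ) + 2) / ((n : ℝ) - 1)) := by
          exact mul_le_mul_of_nonneg_left h5 hfac
      _ = lam00 * (1 + (j : ℝ) * s) := h6
      _ ≤ lam00 + A * v n (j + 1) := by nlinarith

/-- ṽ₁(n)/log n → λ₀₀/λ as n → ∞: the average version age of a node in
the symmetric complete gossip network grows logarithmically in the network size n. -/
theorem complete_graph_age_log_asymptotics
    (lam lam00 : ℝ) (hlam : 0 < lam) (hlam00 : 0 < lam00)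
    (v : ℕ → ℕ → ℝ)
    (hvn : ∀ n : ℕ, 2 ≤ n → v n n = lam00 / lam)
    (hrec : ∀ n : ℕ, 2 ≤ n → ∀ j : ℕ, 1 ≤ j → j ≤ n - 1 →
      v n j = (lam00 + ((j : ℝ) * ((n : ℝ) - j) * lam / ((n : ℝ) - 1)) * v n (j + 1)) /
              ((j : ℝ) * lam / n + (j : ℝ) * ((n : ℝ) - j) * lam / ((n : ℝ) - 1))) :
    Filter.Tendsto (fun n : ℕ => v n 1 / Real.log n) Filter.atTop
      (nhds (lam00 / lam)) := by
  set c : ℝ := lam00 / lam with hc_def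
  have hc : 0 < c := div_pos hlam00 hlam
  set h : ℕ → ℝ := fun n => ∑ i ∈ Finset.Ico 1 n, (1 : ℝ) / i with hh_def
  -- harmonic identification
  have hharm : ∀ n : ℕ, 2 ≤ n → h n = (harmonic (n - 1) : ℝ) := by
    intro n hn
    have hIco : Finset.Ico 1 n = Finset.Icc 1 (n - 1) := by
      rw [← Finset.Ico_add_one_right_eq_Icc]
      congr 1
      omega
    rw [hh_def]
    simp only [hIco, harmonic_eq_sum_Icc]
    push_cast
    simp [one_div]
  have hlog_le : ∀ n : ℕ, 2 ≤ n → Real.log n ≤ h n := by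
    intro n hn
    rw [hharm n hn]
    have := log_add_one_le_harmonic (n - 1)
    have hcast : ((n - 1 : ℕ) + 1 : ℕ) = n := by omega
    rwa [hcast] at this
  have hle_log : ∀ n : ℕ, 2 ≤ n → h n ≤ 1 + Real.log n := by
    intro n hn
    rw [hharm n hn]
    refine le_trans (harmonic_le_one_add_log (n - 1)) ?_
    have h1 : (0 : ℝ) < ((n - 1 : ℕ) : ℝ) := by
      have : 1 ≤ n - 1 := by omega
      exact_mod_cast Nat.lt_of_lt_of_le Nat.zero_lt_one this
    have h2 : ((n - 1 : ℕ) : ℝ) ≤ (n : ℝ) := by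
      exact_mod_cast Nat.sub_le n 1
    have := Real.log_le_log h1 h2
    linarith
  -- bounds on v n 1
  have hupper : ∀ n : ℕ, 2 ≤ n → v n 1 ≤ c * (h n + 5) := by
    intro n hn
    have := gossip_aux_upper lam lam00 hlam hlam00 v n hn (hvn n hn) (hrec n hn)
      (n - 1) 1 (by omega) le_rfl
    simpa [hh_def, hc_def] using this
  have hlower : ∀ n : ℕ, 2 ≤ n → c * (((n : ℝ) - 1) / (n : ℝ)) * h n ≤ v n 1 := by
    intro n hn
    have := gossip_aux_lower lam lam00 hlam hlam00 v n hn (hvn n hn) (hrec n hn)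
      (n - 1) 1 (by omega) le_rfl
    have hcast : ((n - 1 : ℕ) : ℝ) + 1 = (n : ℝ) := by
      have : ((n - 1 : ℕ) : ℝ) = (n : ℝ) - 1 := by
        have h1 : 1 ≤ n := by omega
        push_cast [Nat.cast_sub h1]
        ring
      rw [this]; ring
    rw [hcast] at this
    simpa [hh_def, hc_def] using this
  -- limit machinery
  have hlogtop : Tendsto (fun n : ℕ => Real.log n) atTop atTop :=
    Real.tendsto_log_atTop.comp tendsto_natCast_atTop_atTop
  have hloginv : Tendsto (fun n : ℕ => (Real.log n)⁻¹) atTop (nhds 0) :=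
    hlogtop.inv_tendsto_atTop
  have hlogpos : ∀ᶠ n : ℕ in atTop, 0 < Real.log n := by
    filter_upwards [eventually_ge_atTop 2] with n hn
    exact Real.log_pos (by exact_mod_cast hn)
  -- h n / log n → 1
  have hratio : Tendsto (fun n : ℕ => h n / Real.log n) atTop (nhds 1) := by
    have hub : Tendsto (fun n : ℕ => 1 + (Real.log n)⁻¹) atTop (nhds 1) := by
      have := (tendsto_const_nhds (x := (1:ℝ)) (f := atTop (α := ℕ))).add hloginv
      simpa using this
    refine tendsto_of_tendsto_of_tendsto_of_le_of_le'
      (tendsto_const_nhds (x := (1:ℝ))) hub ?_ ?_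
    · filter_upwards [eventually_ge_atTop 2] with n hn
      have hl : 0 < Real.log n := Real.log_pos (by exact_mod_cast hn)
      rw [le_div_iff₀ hl, one_mul]
      exact hlog_le n hn
    · filter_upwards [eventually_ge_atTop 2] with n hn
      have hl : 0 < Real.log n := Real.log_pos (by exact_mod_cast hn)
      rw [div_le_iff₀ hl]
      have := hle_log n hn
      calc h n ≤ 1 + Real.log n := this
        _ = (1 + (Real.log n)⁻¹) * Real.log n := by
          field_simp
          ring
  have hfrac : Tendsto (fun n : ℕ => ((n : ℝ) - 1) / (n : ℝ)) atTop (nhds 1) := by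
    have h1 : Tendsto (fun n : ℕ => 1 - (n : ℝ)⁻¹) atTop (nhds 1) := by
      have := (tendsto_const_nhds (x := (1:ℝ)) (f := atTop (α := ℕ))).sub
        (tendsto_inv_atTop_zero.comp tendsto_natCast_atTop_atTop)
      simpa using this
    refine h1.congr' ?_
    filter_upwards [eventually_ge_atTop 1] with n hn
    have hn0 : (n : ℝ) ≠ 0 := by
      have : (1 : ℝ) ≤ (n : ℝ) := by exact_mod_cast hn
      linarith
    field_simp
  -- squeeze
  have hLo : Tendsto (fun n : ℕ => c * (((n : ℝ) - 1) / (n : ℝ)) * (h n / Real.log n))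
      atTop (nhds c) := by
    have := ((tendsto_const_nhds (x := c) (f := atTop (α := ℕ))).mul hfrac).mul hratio
    simpa using this
  have hUp : Tendsto (fun n : ℕ => c * (h n / Real.log n) + 5 * c * (Real.log n)⁻¹)
      atTop (nhds c) := by
    have := ((tendsto_const_nhds (x := c) (f := atTop (α := ℕ))).mul hratio).add
      ((tendsto_const_nhds (x := 5 * c) (f := atTop (α := ℕ))).mul hloginv)
    simpa using this
  refine tendsto_of_tendsto_of_tendsto_of_le_of_le' hLo hUp ?_ ?_
  · filter_upwards [eventually_ge_atTop 2] with n hn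
    have hl : 0 < Real.log n := Real.log_pos (by exact_mod_cast hn)
    have hb := hlower n hn
    calc c * (((n : ℝ) - 1) / (n : ℝ)) * (h n / Real.log n)
        = (c * (((n : ℝ) - 1) / (n : ℝ)) * h n) / Real.log n := by ring
      _ ≤ v n 1 / Real.log n := by gcongr
  · filter_upwards [eventually_ge_atTop 2] with n hn
    have hl : 0 < Real.log n := Real.log_pos (by exact_mod_cast hn)
    have hb := hupper n hn
    calc v n 1 / Real.log n ≤ (c * (h n + 5)) / Real.log n := by gcongr
      _ = c * (h n / Real.log n) + 5 * c * (Real.log n)⁻¹ := by ring
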